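/- Let C be a Cayley algebra over a field of characteristic not 2 and V_B the bi-Cayley Jordan pair on B = C ⊕ C. For each a ∈ C, the pair of maps φ_a⁺(x₁,x₂) = (x₁ - x̄₂a, x₂) and φ_a⁻(y₁,y₂) = (y₁, aȳ₁ + y₂) is an automorphism of V_B, and φ_a ∘ φ_b = φ_{a+b} for all a, b ∈ C, so {φ_a : a ∈ C} is an abelian subgroup of Aut(V_B) isomorphic to the additive group (C,+). -/
import Mathlib


/-- The standard involution of a composition algebra:
`x̄ = n(x,1)·1 - x`, where `n(·,·)` is the polar form of the norm `n`. -/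
def ocConj (F : Type) [Field F] (C : Type) [NonAssocRing C] [Module F C]
    (n : QuadraticForm F C) (x : C) : C :=
  QuadraticMap.polar n x 1 • (1 : C) - x

/-- The quadratic operator of the bi-Cayley Jordan pair / triple system on
`B = C ⊕ C`:
`Q_x(y) = (x₁ȳ₁x₁ + x̄₂(y₂x₁), x₂ȳ₂x₂ + (x₂y₁)x̄₁)`. -/
def biQ (F : Type) [Field F] (C : Type) [NonAssocRing C] [Module F C]
    (n : QuadraticForm F C) (x y : C × C) : C × C :=
  ((x.1 * ocConj F C n y.1) * x.1 + ocConj F C n x.2 * (y.2 * x.1),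
   (x.2 * ocConj F C n y.2) * x.2 + (x.2 * y.1) * ocConj F C n x.1)



/-- associator -/
def ascr {C : Type} [NonAssocRing C] (x y z : C) : C := x*y*z - x*(y*z)
set_option linter.unusedSectionVars false

section CompAlg
variable {F : Type} [Field F] {C : Type} [NonAssocRing C] [Module F C]
  [SMulCommClass F C C] [IsScalarTower F C C] (n : QuadraticForm F C)

open QuadraticMap

lemma psl (a : F) (x y : C) : polar n (a • x) y = a * polar n x y := by
  rw [QuadraticMap.polar_smul_left, smul_eq_mul]

lemma psr (a : F) (x y : C) : polar n x (a • y) = a * polar n x y := by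
  rw [QuadraticMap.polar_smul_right, smul_eq_mul]

lemma nadd (x y : C) : n (x + y) = n x + n y + polar n x y := by
  simp [QuadraticMap.polar]

lemma nsub (x y : C) : n (x - y) = n x + n y - polar n x y := by
  have h := nadd n x (-y)
  rw [QuadraticMap.polar_neg_right] at h
  rw [sub_eq_add_neg, h, QuadraticMap.map_neg]; ring

lemma mulpolar_left (hcomp : ∀ x y : C, n (x * y) = n x * n y) (x y z : C) :
    polar n (x*y) (x*z) = n x * polar n y z := by
  simp only [QuadraticMap.polar]
  rw [← mul_add, hcomp, hcomp, hcomp]; ring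

lemma mulpolar_right (hcomp : ∀ x y : C, n (x * y) = n x * n y) (x y z : C) :
    polar n (x*z) (y*z) = polar n x y * n z := by
  simp only [QuadraticMap.polar]
  rw [← add_mul, hcomp, hcomp, hcomp]; ring

lemma exch (hcomp : ∀ x y : C, n (x * y) = n x * n y) (x y w z : C) :
    polar n (x*y) (w*z) + polar n (w*y) (x*z) = polar n x w * polar n y z := by
  have h := mulpolar_left n hcomp (x+w) y z
  rw [add_mul, add_mul, QuadraticMap.polar_add_left, QuadraticMap.polar_add_right,
    QuadraticMap.polar_add_right, mulpolar_left n hcomp x y z, mulpolar_left n hcomp w y z,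
    nadd] at h
  linear_combination h

lemma tr11 (hone : n 1 = 1) : polar n (1:C) 1 = 2 := by
  have h : ((1:C) + 1) = (2:F) • (1:C) := (two_smul F (1:C)).symm
  have h2 := nadd n (1:C) 1
  rw [h, QuadraticMap.map_smul, hone] at h2
  rw [smul_eq_mul] at h2
  linear_combination -h2

lemma bar_def (x : C) : ocConj F C n x = polar n x 1 • (1:C) - x := rfl

lemma bar_add (x y : C) : ocConj F C n (x + y) = ocConj F C n x + ocConj F C n y := by
  simp only [bar_def, QuadraticMap.polar_add_left, add_smul]; abel

lemma bar_sub (x y : C) : ocConj F C n (x - y) = ocConj F C n x - ocConj F C n y := by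
  simp only [bar_def, QuadraticMap.polar_sub_left, sub_smul]; abel

lemma bar_one (hone : n 1 = 1) : ocConj F C n (1:C) = 1 := by
  rw [bar_def, tr11 n hone, two_smul]; abel

lemma trbar (hone : n 1 = 1) (x : C) : polar n (ocConj F C n x) 1 = polar n x 1 := by
  rw [bar_def, QuadraticMap.polar_sub_left, psl, tr11 n hone]; ring

lemma bar_bar (hone : n 1 = 1) (x : C) : ocConj F C n (ocConj F C n x) = x := by
  rw [bar_def n (ocConj F C n x), trbar n hone, bar_def]; abel

lemma polar_barl (x y : C) : polar n (ocConj F C n x) y = polar n x (ocConj F C n y) := by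
  rw [bar_def, bar_def, QuadraticMap.polar_sub_left, QuadraticMap.polar_sub_right, psl, psr,
    QuadraticMap.polar_comm (⇑n) (1:C) y, QuadraticMap.polar_comm (⇑n) x 1]
  ring

lemma n_bar (hone : n 1 = 1) (x : C) : n (ocConj F C n x) = n x := by
  rw [bar_def, nsub, QuadraticMap.map_smul, psl, hone,
    QuadraticMap.polar_comm (⇑n) (1:C) x, smul_eq_mul]
  ring

lemma adj1 (hcomp : ∀ x y : C, n (x * y) = n x * n y) (x y z : C) :
    polar n (x*y) z = polar n y (ocConj F C n x * z) := by
  have h := exch n hcomp x y 1 z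
  rw [one_mul, one_mul] at h
  have hob : ocConj F C n x * z = polar n x 1 • z - x*z := by
    rw [bar_def, sub_mul, smul_mul_assoc, one_mul]
  rw [hob, QuadraticMap.polar_sub_right, psr]
  linear_combination h

lemma adj2 (hcomp : ∀ x y : C, n (x * y) = n x * n y) (x y z : C) :
    polar n (x*y) z = polar n x (z * ocConj F C n y) := by
  have h := exch n hcomp x y z 1
  rw [mul_one, mul_one] at h
  have hob : z * ocConj F C n y = polar n y 1 • z - z*y := by
    rw [bar_def, mul_sub, mul_smul_comm, mul_one]
  rw [hob, QuadraticMap.polar_sub_right, psr]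
  have hc := QuadraticMap.polar_comm (⇑n) (z*y) x
  linear_combination h - hc

lemma eqpol (hnd : ∀ x : C, (∀ y : C, QuadraticMap.polar n x y = 0) → x = 0)
    {x y : C} (h : ∀ z, polar n x z = polar n y z) : x = y := by
  have h2 : ∀ z, polar n (x - y) z = 0 := by
    intro z; rw [QuadraticMap.polar_sub_left, h z, sub_self]
  exact sub_eq_zero.mp (hnd _ h2)

end CompAlg

section CompAlg2
variable {F : Type} [Field F] {C : Type} [NonAssocRing C] [Module F C]
  [SMulCommClass F C C] [IsScalarTower F C C] (n : QuadraticForm F C)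
variable (hc : ∀ x y : C, n (x * y) = n x * n y)
  (hd : ∀ x : C, (∀ y : C, QuadraticMap.polar n x y = 0) → x = 0)
  (h1 : n 1 = 1)
include hc hd h1

open QuadraticMap

lemma K1 (x y : C) : ocConj F C n x * (x * y) = n x • y := by
  apply eqpol n hd
  intro z
  rw [adj1 n hc (ocConj F C n x) (x*y) z, bar_bar n h1, mulpolar_left n hc, psl]

lemma K3 (x y : C) : (y * x) * ocConj F C n x = n x • y := by
  apply eqpol n hd
  intro z
  rw [adj2 n hc (y*x) (ocConj F C n x) z, bar_bar n h1, mulpolar_right n hc, psl,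
    QuadraticMap.polar_comm (⇑n) y z]
  ring

lemma K2 (x y : C) : x * (ocConj F C n x * y) = n x • y := by
  have h := K1 n hc hd h1 (ocConj F C n x) y
  rwa [bar_bar n h1, n_bar n h1] at h

lemma K4 (x y : C) : (y * ocConj F C n x) * x = n x • y := by
  have h := K3 n hc hd h1 (ocConj F C n x) y
  rwa [bar_bar n h1, n_bar n h1] at h

lemma mul_bar_self (x : C) : x * ocConj F C n x = n x • (1:C) := by
  have h := K3 n hc hd h1 x 1; rwa [one_mul] at h

lemma bar_mul_self (x : C) : ocConj F C n x * x = n x • (1:C) := by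
  have h := K1 n hc hd h1 x 1; rwa [mul_one] at h

lemma sqid (x : C) : x * x = polar n x 1 • x - n x • (1:C) := by
  have h := mul_bar_self n hc hd h1 x
  rw [bar_def, mul_sub, mul_smul_comm, mul_one] at h
  linear_combination (norm := abel1) -h

lemma lin_sq (x y : C) : x*y + y*x
    = polar n x 1 • y + polar n y 1 • x - polar n x y • (1:C) := by
  have hxy := sqid n hc hd h1 (x+y)
  rw [add_mul, mul_add, mul_add, QuadraticMap.polar_add_left, nadd] at hxy
  have hx := sqid n hc hd h1 x
  have hy := sqid n hc hd h1 y
  rw [hx, hy] at hxy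
  rw [add_smul, add_smul, add_smul, smul_add, smul_add] at hxy
  linear_combination (norm := abel1) hxy

lemma trmul (x y : C) : polar n (x*y) 1 = polar n x (ocConj F C n y) := by
  have h := adj2 n hc x y 1
  rwa [one_mul] at h

lemma bar_mul (x y : C) :
    ocConj F C n (x*y) = ocConj F C n y * ocConj F C n x := by
  have ht : polar n (x*y) 1 = polar n y 1 * polar n x 1 - polar n x y := by
    rw [trmul n hc hd h1, bar_def, QuadraticMap.polar_sub_right, psr]
  have hl := lin_sq n hc hd h1 x y
  rw [bar_def n (x*y), ht, bar_def n y, bar_def n x]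
  simp only [sub_mul, mul_sub, smul_mul_assoc, mul_smul_comm, one_mul, mul_one,
    smul_smul, sub_smul]
  linear_combination (norm := module) -hl

end CompAlg2

section CompAlg3
variable {F : Type} [Field F] {C : Type} [NonAssocRing C] [Module F C]
  [SMulCommClass F C C] [IsScalarTower F C C] (n : QuadraticForm F C)

open QuadraticMap

lemma ascr_one1 (y z : C) : ascr 1 y z = 0 := by simp [ascr]
lemma ascr_one2 (y z : C) : ascr y 1 z = 0 := by simp [ascr]
lemma ascr_one3 (y z : C) : ascr y z 1 = 0 := by simp [ascr]

lemma ascr_add1 (x x' y z : C) : ascr (x+x') y z = ascr x y z + ascr x' y z := by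
  simp only [ascr, add_mul]; abel
lemma ascr_add2 (x y y' z : C) : ascr x (y+y') z = ascr x y z + ascr x y' z := by
  simp only [ascr, add_mul, mul_add]; abel
lemma ascr_add3 (x y z z' : C) : ascr x y (z+z') = ascr x y z + ascr x y z' := by
  simp only [ascr, mul_add]; abel
lemma ascr_sub1 (x x' y z : C) : ascr (x-x') y z = ascr x y z - ascr x' y z := by
  simp only [ascr, sub_mul]; abel
lemma ascr_sub2 (x y y' z : C) : ascr x (y-y') z = ascr x y z - ascr x y' z := by
  simp only [ascr, sub_mul, mul_sub]; abel
lemma ascr_sub3 (x y z z' : C) : ascr x y (z-z') = ascr x y z - ascr x y z' := by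
  simp only [ascr, mul_sub]; abel
lemma ascr_smul1 (a : F) (x y z : C) : ascr (a • x) y z = a • ascr x y z := by
  simp only [ascr, smul_mul_assoc, smul_sub]
lemma ascr_smul2 (a : F) (x y z : C) : ascr x (a • y) z = a • ascr x y z := by
  simp only [ascr, smul_mul_assoc, mul_smul_comm, smul_sub]
lemma ascr_smul3 (a : F) (x y z : C) : ascr x y (a • z) = a • ascr x y z := by
  simp only [ascr, mul_smul_comm, smul_sub]

variable (hc : ∀ x y : C, n (x * y) = n x * n y)
  (hd : ∀ x : C, (∀ y : C, QuadraticMap.polar n x y = 0) → x = 0)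
  (h1 : n 1 = 1)
include hc hd h1

lemma altL (x y : C) : ascr x x y = 0 := by
  have hK := K1 n hc hd h1 x y
  rw [bar_def, sub_mul, smul_mul_assoc, one_mul] at hK
  have hs := sqid n hc hd h1 x
  rw [ascr, hs]
  simp only [sub_mul, smul_mul_assoc, one_mul]
  linear_combination (norm := abel1) hK

lemma altR (x y : C) : ascr x y y = 0 := by
  have hK := K3 n hc hd h1 y x
  rw [bar_def, mul_sub, mul_smul_comm, mul_one] at hK
  have hs := sqid n hc hd h1 y
  rw [ascr, hs]
  simp only [mul_sub, mul_smul_comm, mul_one]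
  linear_combination (norm := abel1) -hK

lemma skew12 (x y z : C) : ascr x y z = -ascr y x z := by
  have h := altL n hc hd h1 (x+y) z
  rw [ascr_add1, ascr_add2, ascr_add2, altL n hc hd h1 x z, altL n hc hd h1 y z] at h
  linear_combination (norm := abel1) h

lemma skew23 (x y z : C) : ascr x y z = -ascr x z y := by
  have h := altR n hc hd h1 x (y+z)
  rw [ascr_add2, ascr_add3, ascr_add3, altR n hc hd h1 x y, altR n hc hd h1 x z] at h
  linear_combination (norm := abel1) h

lemma cyc (x y z : C) : ascr x y z = ascr y z x := by
  rw [skew12 n hc hd h1, skew23 n hc hd h1, neg_neg]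

lemma swap13 (x y z : C) : ascr x y z = -ascr z y x := by
  rw [skew12 n hc hd h1, cyc n hc hd h1 z y x]

lemma flexa (x y : C) : ascr x y x = 0 := by
  rw [skew12 n hc hd h1, altR n hc hd h1, neg_zero]

lemma flexm (x y : C) : x * (y * x) = x * y * x := by
  have h := flexa n hc hd h1 x y
  rw [ascr, sub_eq_zero] at h
  exact h.symm

lemma tr_ascr (x y z : C) : polar n (ascr x y z) 1 = 0 := by
  rw [ascr, QuadraticMap.polar_sub_left]
  have e1 : polar n (x*y*z) 1 = polar n x (ocConj F C n z * ocConj F C n y) := by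
    rw [trmul n hc hd h1, adj2 n hc]
  have e2 : polar n (x*(y*z)) 1 = polar n x (ocConj F C n z * ocConj F C n y) := by
    rw [trmul n hc hd h1, bar_mul n hc hd h1]
  rw [e1, e2, sub_self]

lemma orth_ascr (x y z : C) : polar n x (ascr x y z) = 0 := by
  rw [QuadraticMap.polar_comm (⇑n) x, ascr, QuadraticMap.polar_sub_left]
  have e1 : polar n (x*y*z) x = n x * polar n z (ocConj F C n y) := by
    rw [adj1 n hc (x*y) z x, bar_mul n hc hd h1, K4 n hc hd h1, psr]
  have e2 : polar n (x*(y*z)) x = n x * polar n z (ocConj F C n y) := by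
    rw [adj1 n hc x (y*z) x, bar_mul_self n hc hd h1, psr, trmul n hc hd h1,
      ← polar_barl, QuadraticMap.polar_comm (⇑n) (ocConj F C n y) z]
  rw [e1, e2, sub_self]

lemma anticom1 {x A : C} (ha : polar n x A = 0) (hb : polar n A 1 = 0) :
    A * x = ocConj F C n x * A := by
  have h := lin_sq n hc hd h1 x A
  rw [ha, hb, zero_smul, zero_smul, add_zero, sub_zero] at h
  rw [bar_def, sub_mul, smul_mul_assoc, one_mul]
  linear_combination (norm := abel1) h

lemma anticom2 {x A : C} (ha : polar n x A = 0) (hb : polar n A 1 = 0) :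
    x * A = A * ocConj F C n x := by
  have h := lin_sq n hc hd h1 x A
  rw [ha, hb, zero_smul, zero_smul, add_zero, sub_zero] at h
  rw [bar_def, mul_sub, mul_smul_comm, mul_one]
  linear_combination (norm := abel1) h

omit hc hd h1 in
lemma teich (w x y z : C) : ascr (w*x) y z - ascr w (x*y) z + ascr w x (y*z)
    = w * ascr x y z + ascr w x y * z := by
  simp only [ascr, mul_sub, sub_mul]; abel

lemma A1 (x y z : C) : ascr x (x*y) z = ocConj F C n x * ascr x y z := by
  have t := teich x x y z
  rw [altL n hc hd h1 x (y*z), altL n hc hd h1 x y, zero_mul, add_zero] at t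
  have hxx : ascr (x*x) y z = polar n x 1 • ascr x y z := by
    rw [sqid n hc hd h1, ascr_sub1, ascr_smul1, ascr_smul1, ascr_one1, smul_zero, sub_zero]
  rw [hxx] at t
  rw [bar_def, sub_mul, smul_mul_assoc, one_mul]
  linear_combination (norm := abel1) -t

lemma A2 (x y z : C) : ascr x y (x*z) = ocConj F C n x * ascr x y z := by
  have t := teich x y x z
  have e1 : ascr (x*y) x z = -(ocConj F C n x * ascr x y z) := by
    rw [skew12 n hc hd h1, A1 n hc hd h1]
  have e2 : ascr x (y*x) z = polar n x 1 • ascr x y z - ocConj F C n x * ascr x y z := by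
    have hyx : y*x = polar n x 1 • y + polar n y 1 • x - polar n x y • (1:C) - x*y := by
      linear_combination (norm := module) lin_sq n hc hd h1 x y
    rw [hyx, ascr_sub2, ascr_sub2, ascr_add2, ascr_smul2, ascr_smul2, ascr_smul2,
      altL n hc hd h1, ascr_one2, A1 n hc hd h1, smul_zero, smul_zero]
    module
  have e3 : x * ascr y x z = -(x * ascr x y z) := by
    rw [skew12 n hc hd h1 y x z, mul_neg]
  rw [e1, e2, e3, flexa n hc hd h1, zero_mul, add_zero] at t
  have hob : ocConj F C n x * ascr x y z
      = polar n x 1 • ascr x y z - x * ascr x y z := by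
    rw [bar_def, sub_mul, smul_mul_assoc, one_mul]
  rw [hob]
  linear_combination (norm := abel1) t

lemma RA1 (z y x : C) : ascr z (y*x) x = ascr z y x * ocConj F C n x := by
  have t := teich z y x x
  rw [altR n hc hd h1 (z*y) x, altR n hc hd h1 y x, mul_zero, zero_add] at t
  have hxx : ascr z y (x*x) = polar n x 1 • ascr z y x := by
    rw [sqid n hc hd h1, ascr_sub3, ascr_smul3, ascr_smul3, ascr_one3, smul_zero, sub_zero]
  rw [hxx] at t
  have hob : ascr z y x * ocConj F C n x
      = polar n x 1 • ascr z y x - ascr z y x * x := by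
    rw [bar_def, mul_sub, mul_smul_comm, mul_one]
  rw [hob]
  linear_combination (norm := abel1) -t

lemma RA2 (z y x : C) : ascr (z*x) y x = ascr z y x * ocConj F C n x := by
  have t := teich z x y x
  have e1 : ascr z (x*y) x = -(ocConj F C n x * ascr z x y) := by
    rw [swap13 n hc hd h1 z (x*y) x, A1 n hc hd h1]
    rw [show ascr x y z = ascr z x y from (cyc n hc hd h1 z x y).symm]
  have e2 : ascr z x (y*x) = polar n x 1 • ascr z x y - ocConj F C n x * ascr z x y := by
    rw [show ascr z x (y*x) = ascr x (y*x) z from cyc n hc hd h1 z x (y*x)]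
    have hyx : y*x = polar n x 1 • y + polar n y 1 • x - polar n x y • (1:C) - x*y := by
      linear_combination (norm := module) lin_sq n hc hd h1 x y
    rw [hyx, ascr_sub2, ascr_sub2, ascr_add2, ascr_smul2, ascr_smul2, ascr_smul2,
      altL n hc hd h1, ascr_one2, A1 n hc hd h1, smul_zero, smul_zero]
    rw [show ascr x y z = ascr z x y from (cyc n hc hd h1 z x y).symm]
    module
  rw [e1, e2, flexa n hc hd h1, mul_zero, zero_add] at t
  have e4 : ascr z y x = -ascr z x y := skew23 n hc hd h1 z y x
  rw [e4, neg_mul]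
  have hob : ascr z x y * ocConj F C n x
      = polar n x 1 • ascr z x y - ascr z x y * x := by
    rw [bar_def, mul_sub, mul_smul_comm, mul_one]
  rw [hob]
  linear_combination (norm := abel1) t

end CompAlg3

section CompAlg4
variable {F : Type} [Field F] {C : Type} [NonAssocRing C] [Module F C]
  [SMulCommClass F C C] [IsScalarTower F C C] (n : QuadraticForm F C)
variable (hc : ∀ x y : C, n (x * y) = n x * n y)
  (hd : ∀ x : C, (∀ y : C, QuadraticMap.polar n x y = 0) → x = 0)
  (h1 : n 1 = 1)
include hc hd h1

open QuadraticMap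

lemma midM (x y z : C) : (x*(y*z))*x = (x*y)*(z*x) := by
  have hAx : ascr x y z * x = ocConj F C n x * ascr x y z :=
    anticom1 n hc hd h1 (orth_ascr n hc hd h1 x y z) (tr_ascr n hc hd h1 x y z)
  have h1' : ascr (x*y) z x = ocConj F C n x * ascr x y z := by
    rw [cyc n hc hd h1 (x*y) z x, cyc n hc hd h1 z x (x*y), A1 n hc hd h1]
  simp only [ascr, sub_mul, mul_sub] at h1' hAx
  linear_combination (norm := abel1) h1' - hAx

lemma mmlin (x y z w : C) :
    (x*(y*z))*w + (w*(y*z))*x = (x*y)*(z*w) + (w*y)*(z*x) := by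
  have h := midM n hc hd h1 (x+w) y z
  simp only [add_mul, mul_add] at h
  linear_combination (norm := abel1) h - midM n hc hd h1 x y z - midM n hc hd h1 w y z

lemma leftM (x y z : C) : ((x*y)*x)*z = x*(y*(x*z)) := by
  have h2 := A2 n hc hd h1 x y z
  have e1 : ascr (x*y) x z = -(ocConj F C n x * ascr x y z) := by
    rw [skew12 n hc hd h1, A1 n hc hd h1]
  simp only [ascr] at e1 h2
  linear_combination (norm := abel1) e1 + h2

lemma rightM (a c x : C) : ((a*c)*x)*c = a*(c*(x*c)) := by
  have e1 : ascr a c (x*c) = ascr a c x * ocConj F C n c := by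
    rw [skew23 n hc hd h1 a c (x*c), RA1 n hc hd h1 a x c, skew23 n hc hd h1 a x c,
      neg_mul, neg_neg]
  have e2 : ascr (a*c) x c = -(ascr a c x * ocConj F C n c) := by
    rw [RA2 n hc hd h1 a x c, skew23 n hc hd h1 a x c, neg_mul]
  simp only [ascr, sub_mul] at e1 e2
  linear_combination (norm := abel1) e1 + e2

lemma Hlem (u a c : C) : ((u*a)*c)*(u*a) = u*((a*c)*(u*a)) := by
  set B := ascr u a c with hB
  have hBa : ascr a c u = B := by
    rw [hB, cyc n hc hd h1 a c u, cyc n hc hd h1 c u a]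
  have hTa : polar n a B = 0 := by rw [← hBa]; exact orth_ascr n hc hd h1 a c u
  have hTu : polar n u B = 0 := orth_ascr n hc hd h1 u a c
  have hTr : polar n B 1 = 0 := tr_ascr n hc hd h1 u a c
  have hBa2 : ocConj F C n a * B = B * a := (anticom1 n hc hd h1 hTa hTr).symm
  have hBu2 : ocConj F C n u * B = B * u := (anticom1 n hc hd h1 hTu hTr).symm
  have s1 : ascr u (a*c) (u*a) = -(ocConj F C n u * (ocConj F C n a * B)) := by
    rw [A2 n hc hd h1 u (a*c) a]
    have e : ascr u (a*c) a = -(ocConj F C n a * B) := by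
      rw [swap13 n hc hd h1 u (a*c) a, A1 n hc hd h1 a c u, hBa]
    rw [e, mul_neg]
  have s2 : ocConj F C n u * (ocConj F C n a * B) = B * (u*a) := by
    rw [hBa2]
    have e1 : ocConj F C n u * (B * a)
        = (ocConj F C n u * B) * a - ascr (ocConj F C n u) B a := by rw [ascr]; abel
    have e2 : ascr (ocConj F C n u) B a = ascr B u a := by
      rw [bar_def, ascr_sub1, ascr_smul1, ascr_one1, smul_zero, zero_sub,
        skew12 n hc hd h1 u B a, neg_neg]
    have e3 : B * (u*a) = (B*u)*a - ascr B u a := by rw [ascr]; abel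
    rw [e1, e2, hBu2, e3]
  have e4 : ((u*a)*c)*(u*a) = (u*(a*c))*(u*a) + B*(u*a) := by
    have e : (u*a)*c = u*(a*c) + B := by rw [hB, ascr]; abel
    rw [e, add_mul]
  have e5 : u*((a*c)*(u*a)) = (u*(a*c))*(u*a) - ascr u (a*c) (u*a) := by
    rw [ascr]; abel
  rw [e4, e5, s1, s2]; abel

lemma gplus (x c u a : C) :
    (x*(c*u))*a + u*((a*c)*x) + ((u*a)*c)*(u*a)
    = (x*c)*(u*a) + ((u*a)*c)*x + u*((a*c)*(u*a)) := by
  have p1 := mmlin n hc hd h1 x c u a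
  have p2 : ascr (a*c) u x = -ascr u (a*c) x := skew12 n hc hd h1 (a*c) u x
  have h0 : ascr a c u = ascr u a c := by
    rw [cyc n hc hd h1 a c u, cyc n hc hd h1 c u a]
  have p3 : ascr a c u * x = ascr u a c * x := by rw [h0]
  have p4 := Hlem n hc hd h1 u a c
  simp only [ascr, sub_mul, neg_sub] at p2 p3
  linear_combination (norm := abel1) p1 - p2 + p3 + p4

lemma g2 (a c u y : C) :
    a*((c*u)*y) + (y*(u*a))*c = ((a*c)*u)*y + (y*u)*(a*c) := by
  have q1 := mmlin n hc hd h1 y u a c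
  have q4 : ascr a (c*u) y = -ascr (c*u) a y := skew12 n hc hd h1 a (c*u) y
  have h0 : ascr a c u = ascr c u a := cyc n hc hd h1 a c u
  have q5 : ascr a c u * y = ascr c u a * y := by rw [h0]
  simp only [ascr, sub_mul, neg_sub] at q4 q5
  linear_combination (norm := abel1) q1 - q4 - q5

lemma g4 (a c u : C) : ((a*c)*u)*(a*c) = ((a*c)*(u*a))*c := by
  set B := ascr a c u with hB
  have h0 : ascr a c u = ascr c u a := cyc n hc hd h1 a c u
  have h0' : ascr c u a = ascr u a c := cyc n hc hd h1 c u a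
  have hTa : polar n a B = 0 := orth_ascr n hc hd h1 a c u
  have hTc : polar n c B = 0 := by
    rw [hB, h0]; exact orth_ascr n hc hd h1 c u a
  have hTr : polar n B 1 = 0 := tr_ascr n hc hd h1 a c u
  have r1 : ascr (a*c) (u*a) c = -((B * ocConj F C n a) * ocConj F C n c) := by
    rw [RA2 n hc hd h1 a (u*a) c]
    have e : ascr a (u*a) c = -(B * ocConj F C n a) := by
      rw [swap13 n hc hd h1 a (u*a) c, RA1 n hc hd h1 c u a, ← h0, ← hB]
    rw [e, neg_mul]
  have r2 : (B * ocConj F C n a) * ocConj F C n c = (a*c)*B := by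
    rw [← anticom2 n hc hd h1 hTa hTr]
    have e1 : (a*B) * ocConj F C n c
        = a*(B*ocConj F C n c) + ascr a B (ocConj F C n c) := by rw [ascr]; abel
    have e2 : ascr a B (ocConj F C n c) = ascr a c B := by
      rw [bar_def n c, ascr_sub3, ascr_smul3, ascr_one3, smul_zero, zero_sub,
        skew23 n hc hd h1 a B c, neg_neg]
    have e3 : (a*c)*B = a*(c*B) + ascr a c B := by rw [ascr]; abel
    rw [e1, e2, ← anticom2 n hc hd h1 hTc hTr, e3]
  have f1 : ((a*c)*u)*(a*c) = (a*c)*(u*(a*c)) := (flexm n hc hd h1 (a*c) u).symm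
  have f2 : u*(a*c) = (u*a)*c - B := by rw [hB, h0, h0', ascr]; abel
  have f3 : ((a*c)*(u*a))*c = (a*c)*((u*a)*c) + ascr (a*c) (u*a) c := by
    rw [ascr]; abel
  rw [f1, f2, mul_sub, f3, r1, r2]
  abel

lemma comp1 (x1 u c y2 a : C) :
    ((x1*c)*x1 + u*(y2*x1)) - (u*(y2*u) + x1*(c*u))*a
    = ((x1 - u*a)*c)*(x1 - u*a) + u*((a*c + y2)*(x1 - u*a)) := by
  have hE : u*(y2*(u*a)) = (u*(y2*u))*a := by
    rw [flexm n hc hd h1 u y2, leftM n hc hd h1 u y2 a]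
  have hG := gplus n hc hd h1 x1 c u a
  simp only [sub_mul, mul_sub, mul_add, add_mul]
  linear_combination (norm := abel1) hE - hG

lemma comp2 (x2 y1 v w2 w1 : C) :
    (x2 * (y1 * v + w2)) * x2 + (x2*y1)*(w1 - v * x2)
    = (x2 * w2) * x2 + (x2*y1)*w1 := by
  have hM := midM n hc hd h1 x2 y1 v
  simp only [mul_add, add_mul, mul_sub]
  linear_combination (norm := abel1) hM

lemma comp3 (y1 x2 w1 v w2 : C) :
    (y1*(w1 - v*x2))*y1 + (y1*v + w2)*(x2*y1)
    = (y1*w1)*y1 + w2*(x2*y1) := by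
  have hM := midM n hc hd h1 y1 v x2
  simp only [mul_sub, sub_mul, add_mul]
  linear_combination (norm := abel1) -hM

lemma comp4 (a c u x1 y2 : C) :
    a*(c*(x1*c) + (c*u)*y2) + ((y2*u)*y2 + (y2*x1)*c)
    = ((a*c + y2)*u)*(a*c + y2) + ((a*c + y2)*(x1 - u*a))*c := by
  have hRM := rightM n hc hd h1 a c x1
  have hG2 := g2 n hc hd h1 a c u y2
  have hG4 := g4 n hc hd h1 a c u
  simp only [mul_add, add_mul, mul_sub, sub_mul]
  linear_combination (norm := abel1) -hRM + hG2 - hG4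

end CompAlg4

/-- For each `a` in a Cayley algebra `C` (char ≠ 2), the pair of maps
`φ_a⁺(x₁,x₂) = (x₁ - x̄₂a, x₂)`, `φ_a⁻(y₁,y₂) = (y₁, aȳ₁ + y₂)` is an
automorphism of the bi-Cayley Jordan pair, and `φ_a ∘ φ_b = φ_{a+b}`, so that
`{φ_a : a ∈ C}` is an abelian subgroup of `Aut(V_B)` isomorphic to `(C,+)`. -/
theorem stmt_10 (F : Type) [Field F] (hchar : (2 : F) ≠ 0)
    (C : Type) [NonAssocRing C] [Module F C] [SMulCommClass F C C] [IsScalarTower F C C]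
    (n : QuadraticForm F C)
    (hcomp : ∀ x y : C, n (x * y) = n x * n y)
    (hnd : ∀ x : C, (∀ y : C, QuadraticMap.polar n x y = 0) → x = 0)
    (hdim : Module.finrank F C = 8) :
    ∀ φp φm : C → C × C → C × C,
      (∀ (a : C) (x : C × C), φp a x = (x.1 - ocConj F C n x.2 * a, x.2)) →
      (∀ (a : C) (y : C × C), φm a y = (y.1, a * ocConj F C n y.1 + y.2)) →
      (∀ a : C, Function.Bijective (φp a) ∧ Function.Bijective (φm a)) ∧
      (∀ (a : C) (x y : C × C), φp a (biQ F C n x y) = biQ F C n (φp a x) (φm a y)) ∧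
      (∀ (a : C) (y x : C × C), φm a (biQ F C n y x) = biQ F C n (φm a y) (φp a x)) ∧
      (∀ a b : C, φp a ∘ φp b = φp (a + b) ∧ φm a ∘ φm b = φm (a + b)) ∧
      (∀ a b : C, φp a = φp b ∧ φm a = φm b → a = b) := by
  intro φp φm hφp hφm
  have hnt : Nontrivial C := by
    have hpos : 0 < Module.finrank F C := by rw [hdim]; norm_num
    exact Module.nontrivial_of_finrank_pos hpos
  have h1 : n 1 = 1 := by
    have h11 := hcomp 1 1
    rw [mul_one] at h11
    by_contra hne
    have h0 : n 1 = 0 := by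
      have hz : n 1 * (n 1 - 1) = 0 := by linear_combination -h11
      rcases mul_eq_zero.mp hz with h | h
      · exact h
      · exact absurd (sub_eq_zero.mp h) hne
    have hz : ∀ x : C, n x = 0 := fun x => by
      have hx := hcomp x 1; rw [mul_one, h0, mul_zero] at hx; exact hx
    have hp : ∀ y : C, QuadraticMap.polar n (1:C) y = 0 := fun y => by
      simp [QuadraticMap.polar, hz]
    exact one_ne_zero (hnd 1 hp)
  -- composition laws
  have hpcomp : ∀ a b : C, φp a ∘ φp b = φp (a + b) := by
    intro a b; funext x
    show φp a (φp b x) = φp (a+b) x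
    rw [hφp, hφp, hφp]
    dsimp only
    simp only [Prod.mk.injEq, and_true]
    rw [mul_add]; abel
  have hmcomp : ∀ a b : C, φm a ∘ φm b = φm (a + b) := by
    intro a b; funext y
    show φm a (φm b y) = φm (a+b) y
    rw [hφm, hφm, hφm]
    dsimp only
    simp only [Prod.mk.injEq, true_and]
    rw [add_mul]; abel
  have hp0 : φp 0 = id := by
    funext x; rw [hφp, mul_zero, sub_zero]; rfl
  have hm0 : φm 0 = id := by
    funext y; rw [hφm, zero_mul, zero_add]; rfl
  refine ⟨?_, ?_, ?_, fun a b => ⟨hpcomp a b, hmcomp a b⟩, ?_⟩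
  · -- bijectivity
    intro a
    constructor
    · apply Function.bijective_iff_has_inverse.mpr
      refine ⟨φp (-a), ?_, ?_⟩
      · intro x
        have h := congrFun (hpcomp (-a) a) x
        rw [neg_add_cancel, hp0] at h
        exact h
      · intro x
        have h := congrFun (hpcomp a (-a)) x
        rw [add_neg_cancel, hp0] at h
        exact h
    · apply Function.bijective_iff_has_inverse.mpr
      refine ⟨φm (-a), ?_, ?_⟩
      · intro y
        have h := congrFun (hmcomp (-a) a) y
        rw [neg_add_cancel, hm0] at h
        exact h
      · intro y
        have h := congrFun (hmcomp a (-a)) y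
        rw [add_neg_cancel, hm0] at h
        exact h
  · -- plus-side automorphism identity
    intro a x y
    rw [hφp a (biQ F C n x y)]
    rw [show biQ F C n (φp a x) (φm a y)
        = biQ F C n (x.1 - ocConj F C n x.2 * a, x.2) (y.1, a * ocConj F C n y.1 + y.2) by
      rw [hφp, hφm]]
    simp only [biQ]
    simp only [Prod.mk.injEq]
    constructor
    · rw [bar_add n, bar_mul n hcomp hnd h1, bar_mul n hcomp hnd h1,
        bar_mul n hcomp hnd h1, bar_mul n hcomp hnd h1, bar_bar n h1, bar_bar n h1]
      exact comp1 n hcomp hnd h1 x.1 (ocConj F C n x.2) (ocConj F C n y.1) y.2 a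
    · rw [bar_add n, bar_mul n hcomp hnd h1, bar_bar n h1,
        bar_sub n, bar_mul n hcomp hnd h1, bar_bar n h1]
      exact (comp2 n hcomp hnd h1 x.2 y.1 (ocConj F C n a) (ocConj F C n y.2)
        (ocConj F C n x.1)).symm
  · -- minus-side automorphism identity
    intro a y x
    rw [hφm a (biQ F C n y x)]
    rw [show biQ F C n (φm a y) (φp a x)
        = biQ F C n (y.1, a * ocConj F C n y.1 + y.2) (x.1 - ocConj F C n x.2 * a, x.2) by
      rw [hφp, hφm]]
    simp only [biQ]
    simp only [Prod.mk.injEq]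
    constructor
    · rw [bar_sub n, bar_mul n hcomp hnd h1, bar_bar n h1,
        bar_add n, bar_mul n hcomp hnd h1, bar_bar n h1]
      exact (comp3 n hcomp hnd h1 y.1 x.2 (ocConj F C n x.1) (ocConj F C n a)
        (ocConj F C n y.2)).symm
    · rw [bar_add n, bar_mul n hcomp hnd h1, bar_mul n hcomp hnd h1,
        bar_mul n hcomp hnd h1, bar_mul n hcomp hnd h1, bar_bar n h1, bar_bar n h1]
      rw [show a * (ocConj F C n y.1 * (x.1 * ocConj F C n y.1)
            + (ocConj F C n y.1 * ocConj F C n x.2) * y.2)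
          + ((y.2 * ocConj F C n x.2) * y.2 + (y.2 * x.1) * ocConj F C n y.1)
          = ((a * ocConj F C n y.1 + y.2) * ocConj F C n x.2) * (a * ocConj F C n y.1 + y.2)
          + ((a * ocConj F C n y.1 + y.2) * (x.1 - ocConj F C n x.2 * a)) * ocConj F C n y.1
        from comp4 n hcomp hnd h1 a (ocConj F C n y.1) (ocConj F C n x.2) x.1 y.2]
  · -- injectivity
    intro a b h
    have h2 := congrFun h.2 (1, 0)
    rw [hφm, hφm] at h2
    dsimp only at h2
    have h3 := congrArg Prod.snd h2
    dsimp only at h3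
    rw [bar_one n h1, mul_one, mul_one, add_zero, add_zero] at h3
    exact h3
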